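/- Let t0 < T, θ ∈ (0,1), 0 < μ < 1, γ > 0, b > 0, r > 0, L > 0 and x0 ∈ ℝ with |x0| ≤ L. Set A = r(1 + 2L). If C1(T,A) < 1, then there is at most one continuous function x : [t0,T] → [−L, L] satisfying the integral equation x(t) = x0 + (I^{θ,μ,γ}(r x(·)(1 − x(·))))(t) for all t ∈ [t0,T] (the integral-equation form of the generalized ABC quadratic logistic model with right-hand side f(x) = r x (1 − x)). -/

import Mathlib

open Real MeasureTheory Set

/-- Generalized binomial coefficient `C(γ, i) = γ(γ-1)⋯(γ-i+1)/i!`. -/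
noncomputable def genBinom (γ : ℝ) (i : ℕ) : ℝ :=
  (∏ j ∈ Finset.range i, (γ - j)) / (Nat.factorial i : ℝ)

/-- Rising factorial `(ρ)_k = ρ(ρ+1)⋯(ρ+k-1)`. -/
noncomputable def risingFac (ρ : ℝ) (k : ℕ) : ℝ :=
  ∏ j ∈ Finset.range k, (ρ + j)

/-- Generalized Mittag-Leffler function `E_{θ,β}^ρ(λ, z)`
(terms with `Γ` at a pole vanish since `Real.Gamma` is `0` there). -/
noncomputable def mittagLeffler (θ β ρ lam z : ℝ) : ℝ :=
  ∑' k : ℕ, lam ^ k * z ^ ((k : ℝ) * θ + β - 1) * risingFac ρ k /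
    (Real.Gamma ((k : ℝ) * θ + β) * (Nat.factorial k : ℝ))

/-- Generalized AB fractional integral `(I^{θ,μ,γ} η)(t)` starting at `t0`,
with normalization constant `b = B(θ) > 0`. -/
noncomputable def ABIntegral (t0 b θ μ γ : ℝ) (η : ℝ → ℝ) (t : ℝ) : ℝ :=
  ∑' i : ℕ, genBinom γ i * θ ^ i /
      (b * (1 - θ) ^ ((i : ℝ) - 1) * Real.Gamma ((i : ℝ) * θ + 1 - μ)) *
    ∫ s in t0..t, (t - s) ^ ((i : ℝ) * θ - μ) * η s

/-- Generalized ABC fractional derivative `(D^{θ,μ,γ} f)(t)` starting at `t0`,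
with `λ = -θ/(1-θ)` and normalization constant `b = B(θ) > 0`. -/
noncomputable def ABCDeriv (t0 b θ μ γ : ℝ) (f : ℝ → ℝ) (t : ℝ) : ℝ :=
  (b / (1 - θ)) * ∫ s in t0..t, mittagLeffler θ μ γ (-θ / (1 - θ)) (t - s) * deriv f s

/-- Generalized ABR fractional derivative `(R^{θ,μ,γ} f)(t)` starting at `t0`. -/
noncomputable def ABRDeriv (t0 b θ μ γ : ℝ) (f : ℝ → ℝ) (t : ℝ) : ℝ :=
  (b / (1 - θ)) *
    deriv (fun u => ∫ s in t0..u, mittagLeffler θ μ γ (-θ / (1 - θ)) (u - s) * f s) t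

/-- The contraction constant `C1(T, A)` (case `μ ≠ 1`). -/
noncomputable def C1const (t0 T b θ μ γ A : ℝ) : ℝ :=
  (A / b) * ∑' i : ℕ, |genBinom γ i| * θ ^ i * (T - t0) ^ ((i : ℝ) * θ + 1 - μ) /
    ((1 - θ) ^ ((i : ℝ) - 1) * Real.Gamma ((i : ℝ) * θ + 2 - μ))

/-- The contraction constant `C2(T, A)` (case `μ = 1`). -/
noncomputable def C2const (t0 T b θ γ A : ℝ) : ℝ :=
  (A / b) * ((1 - θ) +
    ∑' i : ℕ, |genBinom γ (i + 1)| * θ ^ (i + 1) * (T - t0) ^ (((i : ℝ) + 1) * θ) /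
      ((1 - θ) ^ (i : ℕ) * Real.Gamma (((i : ℝ) + 1) * θ + 1)))

/-- The operator `Υ` in the case `μ = 1`, whose `i = 0` term reduces to `((1-θ)/b) f(t, x(t))`. -/
noncomputable def UpsilonMuOne (t0 b θ γ x0 : ℝ) (f : ℝ → ℝ → ℝ) (x : ℝ → ℝ) (t : ℝ) : ℝ :=
  x0 + ((1 - θ) / b) * f t (x t) +
    ∑' i : ℕ, genBinom γ (i + 1) * θ ^ (i + 1) /
        (b * (1 - θ) ^ (i : ℕ) * Real.Gamma (((i : ℝ) + 1) * θ)) *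
      ∫ s in t0..t, (t - s) ^ (((i : ℝ) + 1) * θ - 1) * f s (x s)
private lemma prod_range_add_one (i : ℕ) :
    ∏ j ∈ Finset.range i, ((j : ℝ) + 1) = (Nat.factorial i : ℝ) := by
  induction i with
  | zero => simp
  | succ n ih => rw [Finset.prod_range_succ, ih, Nat.factorial_succ]; push_cast; ring

private lemma abs_genBinom_le {γ : ℝ} (hγ : 0 ≤ γ) (i : ℕ) :
    |genBinom γ i| ≤ (γ + 1) ^ i := by
  have hfac : (0 : ℝ) < (Nat.factorial i : ℝ) := by exact_mod_cast Nat.factorial_pos i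
  rw [genBinom, abs_div, Nat.abs_cast, div_le_iff₀ hfac]
  calc |∏ j ∈ Finset.range i, (γ - j)| = ∏ j ∈ Finset.range i, |γ - (j : ℝ)| :=
        Finset.abs_prod _ _
    _ ≤ ∏ j ∈ Finset.range i, (γ + 1) * ((j : ℝ) + 1) := by
        refine Finset.prod_le_prod (fun j _ => abs_nonneg _) (fun j _ => ?_)
        have hj : (0 : ℝ) ≤ (j : ℝ) := Nat.cast_nonneg j
        rw [abs_le]
        constructor <;> nlinarith
    _ = (γ + 1) ^ i * (Nat.factorial i : ℝ) := by
        rw [Finset.prod_mul_distrib, Finset.prod_const, Finset.card_range, prod_range_add_one]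

private lemma gamma_ratio {s θ : ℝ} (hs : 1 ≤ s) (hθ0 : 0 < θ) (hθ1 : θ < 1) :
    Real.Gamma s * (s + θ - 1) ^ θ ≤ Real.Gamma (s + θ) := by
  have hx : (0 : ℝ) < s + θ - 1 := by linarith
  have h1 : (0 : ℝ) < s := by linarith
  have h2 : (0 : ℝ) < s + θ := by linarith
  have hG1 := Real.Gamma_pos_of_pos h1
  have hG2 := Real.Gamma_pos_of_pos h2
  have hG3 := Real.Gamma_pos_of_pos hx
  have hconv := Real.convexOn_log_Gamma.2 (Set.mem_Ioi.mpr hx) (Set.mem_Ioi.mpr h2)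
      hθ0.le (by linarith : (0:ℝ) ≤ 1 - θ) (by ring)
  have hcomb : θ • (s + θ - 1) + (1 - θ) • (s + θ) = s := by
    simp only [smul_eq_mul]; ring
  rw [hcomb] at hconv
  simp only [Function.comp_apply, smul_eq_mul] at hconv
  have hrec : Real.Gamma (s + θ) = (s + θ - 1) * Real.Gamma (s + θ - 1) := by
    rw [← Real.Gamma_add_one hx.ne']
    congr 1; ring
  have hlog : Real.log (Real.Gamma (s + θ - 1)) =
      Real.log (Real.Gamma (s + θ)) - Real.log (s + θ - 1) := by
    rw [hrec, Real.log_mul hx.ne' hG3.ne']; ring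
  rw [hlog] at hconv
  have key : Real.log (Real.Gamma s) + θ * Real.log (s + θ - 1) ≤
      Real.log (Real.Gamma (s + θ)) := by linarith
  have hthis := Real.exp_le_exp.mpr key
  rw [Real.exp_add, Real.exp_log hG1, Real.exp_log hG2] at hthis
  rw [Real.rpow_def_of_pos hx, mul_comm (Real.log (s + θ - 1)) θ]
  exact hthis

private lemma summable_pow_div_gamma {θ c : ℝ} (Q : ℝ) (hθ0 : 0 < θ) (hθ1 : θ < 1) (hc : 1 ≤ c) :
    Summable (fun i : ℕ => Q ^ i / Real.Gamma ((i : ℝ) * θ + c)) := by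
  apply summable_of_ratio_norm_eventually_le (r := 1/2) (by norm_num)
  have htend : Filter.Tendsto (fun n : ℕ => ((n : ℝ) * θ + c + θ - 1) ^ θ)
      Filter.atTop Filter.atTop := by
    apply (tendsto_rpow_atTop hθ0).comp
    have heq : (fun n : ℕ => (n : ℝ) * θ + c + θ - 1) =
        fun n : ℕ => (n : ℝ) * θ + (c + θ - 1) := by funext n; ring
    rw [heq]
    exact Filter.tendsto_atTop_add_const_right _ _
      (Filter.Tendsto.atTop_mul_const hθ0 tendsto_natCast_atTop_atTop)
  filter_upwards [htend.eventually_ge_atTop (2 * |Q|)] with n hn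
  have hs : (1 : ℝ) ≤ (n : ℝ) * θ + c := by
    have : (0:ℝ) ≤ (n:ℝ) * θ := by positivity
    linarith
  have hG1 := Real.Gamma_pos_of_pos (by linarith : (0:ℝ) < (n : ℝ) * θ + c)
  have hG2 := Real.Gamma_pos_of_pos (by linarith : (0:ℝ) < (n : ℝ) * θ + c + θ)
  have hrat := gamma_ratio hs hθ0 hθ1
  have key : 2 * |Q| * Real.Gamma ((n : ℝ) * θ + c) ≤ Real.Gamma ((n : ℝ) * θ + c + θ) := by
    calc 2 * |Q| * Real.Gamma ((n : ℝ) * θ + c)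
        ≤ ((n : ℝ) * θ + c + θ - 1) ^ θ * Real.Gamma ((n : ℝ) * θ + c) := by
          apply mul_le_mul_of_nonneg_right hn hG1.le
      _ ≤ Real.Gamma ((n : ℝ) * θ + c + θ) := by
          rw [mul_comm]; exact hrat
  have harg : ((n + 1 : ℕ) : ℝ) * θ + c = (n : ℝ) * θ + c + θ := by push_cast; ring
  rw [Real.norm_eq_abs, Real.norm_eq_abs, abs_div, abs_div, abs_pow, abs_pow, harg,
    abs_of_pos hG1, abs_of_pos hG2,
    show (1:ℝ)/2 * (|Q| ^ n / Real.Gamma ((n : ℝ) * θ + c)) =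
      (1/2 * |Q| ^ n) / Real.Gamma ((n : ℝ) * θ + c) by ring,
    div_le_div_iff₀ hG2 hG1]
  have hQn : (0:ℝ) ≤ |Q| ^ n := by positivity
  calc |Q| ^ (n + 1) * Real.Gamma ((n : ℝ) * θ + c)
      = |Q| ^ n * (|Q| * Real.Gamma ((n : ℝ) * θ + c)) := by rw [pow_succ]; ring
    _ ≤ |Q| ^ n * ((1/2) * Real.Gamma ((n : ℝ) * θ + c + θ)) := by
        apply mul_le_mul_of_nonneg_left _ hQn
        linarith
    _ = 1 / 2 * |Q| ^ n * Real.Gamma ((n : ℝ) * θ + c + θ) := by ring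

private lemma rpow_intervalIntegrable {t0 t p : ℝ} (hp : -1 < p) :
    IntervalIntegrable (fun s => (t - s) ^ p) volume t0 t := by
  have base : IntervalIntegrable (fun x : ℝ => x ^ p) volume 0 (t - t0) :=
    intervalIntegral.intervalIntegrable_rpow' hp
  have comp := base.comp_sub_left t
  rw [sub_zero, sub_sub_cancel] at comp
  exact comp.symm

private lemma integrable_rpow_mul {t0 t p : ℝ} {η : ℝ → ℝ} (ht : t0 ≤ t) (hp : -1 < p)
    (hη : ContinuousOn η (Set.Icc t0 t)) :
    IntervalIntegrable (fun s => (t - s) ^ p * η s) volume t0 t :=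
  (rpow_intervalIntegrable hp).mul_continuousOn (by rwa [Set.uIcc_of_le ht])

private lemma integral_rpow_eval {t0 t p : ℝ} (ht : t0 ≤ t) (hp : -1 < p) :
    ∫ s in t0..t, (t - s) ^ p = (t - t0) ^ (p + 1) / (p + 1) := by
  rw [intervalIntegral.integral_comp_sub_left (fun x : ℝ => x ^ p) t, sub_self,
    integral_rpow (Or.inl hp), Real.zero_rpow (by linarith : p + 1 ≠ 0), sub_zero]

private lemma abs_integral_rpow_mul_le {t0 t p C : ℝ} {η : ℝ → ℝ} (ht : t0 ≤ t) (hp : -1 < p)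
    (hη : ContinuousOn η (Set.Icc t0 t)) (hC : ∀ s ∈ Set.Icc t0 t, |η s| ≤ C) :
    |∫ s in t0..t, (t - s) ^ p * η s| ≤ C * ((t - t0) ^ (p + 1) / (p + 1)) := by
  have hC0 : 0 ≤ C := le_trans (abs_nonneg _) (hC t0 ⟨le_refl _, ht⟩)
  have hg : IntervalIntegrable (fun s => (t - s) ^ p * C) volume t0 t :=
    (rpow_intervalIntegrable hp).mul_const C
  have hae : ∀ᵐ s ∂(volume.restrict (Set.uIoc t0 t)),
      ‖(t - s) ^ p * η s‖ ≤ (t - s) ^ p * C := by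
    rw [Set.uIoc_of_le ht]
    refine ae_restrict_of_forall_mem measurableSet_Ioc (fun s hs => ?_)
    have hs' : s ∈ Set.Icc t0 t := Set.Ioc_subset_Icc_self hs
    have hts : (0:ℝ) ≤ t - s := by linarith [hs'.2]
    rw [Real.norm_eq_abs, abs_mul, abs_of_nonneg (Real.rpow_nonneg hts p)]
    exact mul_le_mul_of_nonneg_left (hC s hs') (Real.rpow_nonneg hts p)
  have h1 := intervalIntegral.norm_integral_le_abs_of_norm_le hae hg
  rw [Real.norm_eq_abs] at h1
  refine h1.trans ?_
  rw [intervalIntegral.integral_mul_const, integral_rpow_eval ht hp]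
  have hnn : (0:ℝ) ≤ (t - t0) ^ (p + 1) / (p + 1) :=
    div_nonneg (Real.rpow_nonneg (by linarith) _) (by linarith)
  rw [abs_mul, abs_of_nonneg hC0, abs_of_nonneg hnn]
  ring_nf
  exact le_refl _



/-- Per-term bound for the AB integral terms. -/
private lemma term_bound {t0 T b θ μ γ : ℝ} (htT : t0 ≤ T) (hθ0 : 0 < θ) (hθ1 : θ < 1)
    (hμ0 : 0 < μ) (hμ1 : μ < 1) (hb : 0 < b) {C : ℝ} {η : ℝ → ℝ}
    (hη : ContinuousOn η (Set.Icc t0 T)) (hC : ∀ s ∈ Set.Icc t0 T, |η s| ≤ C)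
    {t : ℝ} (ht : t ∈ Set.Icc t0 T) (i : ℕ) :
    |genBinom γ i * θ ^ i / (b * (1 - θ) ^ ((i : ℝ) - 1) * Real.Gamma ((i : ℝ) * θ + 1 - μ)) *
      ∫ s in t0..t, (t - s) ^ ((i : ℝ) * θ - μ) * η s| ≤
    (C / b) * (|genBinom γ i| * θ ^ i * (T - t0) ^ ((i : ℝ) * θ + 1 - μ) /
      ((1 - θ) ^ ((i : ℝ) - 1) * Real.Gamma ((i : ℝ) * θ + 2 - μ))) := by
  have hiθ : (0:ℝ) ≤ (i:ℝ) * θ := by positivity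
  have hp : (-1:ℝ) < (i:ℝ) * θ - μ := by linarith
  have hp1 : (0:ℝ) < (i:ℝ) * θ - μ + 1 := by linarith
  have hηt : ContinuousOn η (Set.Icc t0 t) := hη.mono (Set.Icc_subset_Icc_right ht.2)
  have hCt : ∀ s ∈ Set.Icc t0 t, |η s| ≤ C := fun s hs => hC s ⟨hs.1, le_trans hs.2 ht.2⟩
  have hint := abs_integral_rpow_mul_le ht.1 hp hηt hCt
  have hC0 : 0 ≤ C := le_trans (abs_nonneg _) (hC t0 ⟨le_refl _, htT⟩)
  have hmono : (t - t0) ^ ((i:ℝ)*θ - μ + 1) ≤ (T - t0) ^ ((i:ℝ)*θ - μ + 1) :=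
    Real.rpow_le_rpow (by linarith [ht.1]) (by linarith [ht.2]) hp1.le
  have h1θ : (0:ℝ) < 1 - θ := by linarith
  have hpow : (0:ℝ) < (1 - θ) ^ ((i:ℝ) - 1) := Real.rpow_pos_of_pos h1θ _
  have hΓ1 : 0 < Real.Gamma ((i:ℝ)*θ + 1 - μ) := Real.Gamma_pos_of_pos (by linarith)
  have hΓ2 : 0 < Real.Gamma ((i:ℝ)*θ + 2 - μ) := Real.Gamma_pos_of_pos (by linarith)
  have hΓrec : Real.Gamma ((i:ℝ)*θ + 2 - μ) =
      ((i:ℝ)*θ - μ + 1) * Real.Gamma ((i:ℝ)*θ + 1 - μ) := by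
    rw [show (i:ℝ)*θ + 2 - μ = ((i:ℝ)*θ + 1 - μ) + 1 by ring,
      Real.Gamma_add_one (by linarith : ((i:ℝ)*θ + 1 - μ) ≠ 0)]
    ring_nf
  have hden : (0:ℝ) < b * (1 - θ) ^ ((i:ℝ) - 1) * Real.Gamma ((i:ℝ)*θ + 1 - μ) := by positivity
  have hXnn : (0:ℝ) ≤ (T - t0) ^ ((i:ℝ)*θ - μ + 1) := Real.rpow_nonneg (by linarith [ht.1, ht.2]) _
  calc |genBinom γ i * θ ^ i / (b * (1 - θ) ^ ((i : ℝ) - 1) *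
          Real.Gamma ((i : ℝ) * θ + 1 - μ)) * ∫ s in t0..t, (t - s) ^ ((i : ℝ) * θ - μ) * η s|
      = |genBinom γ i * θ ^ i / (b * (1 - θ) ^ ((i : ℝ) - 1) *
          Real.Gamma ((i : ℝ) * θ + 1 - μ))| *
        |∫ s in t0..t, (t - s) ^ ((i : ℝ) * θ - μ) * η s| := abs_mul _ _
    _ ≤ |genBinom γ i * θ ^ i / (b * (1 - θ) ^ ((i : ℝ) - 1) *
          Real.Gamma ((i : ℝ) * θ + 1 - μ))| *
        (C * ((t - t0) ^ ((i:ℝ)*θ - μ + 1) / ((i:ℝ)*θ - μ + 1))) :=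
        mul_le_mul_of_nonneg_left hint (abs_nonneg _)
    _ ≤ |genBinom γ i * θ ^ i / (b * (1 - θ) ^ ((i : ℝ) - 1) *
          Real.Gamma ((i : ℝ) * θ + 1 - μ))| *
        (C * ((T - t0) ^ ((i:ℝ)*θ - μ + 1) / ((i:ℝ)*θ - μ + 1))) := by
        apply mul_le_mul_of_nonneg_left _ (abs_nonneg _)
        apply mul_le_mul_of_nonneg_left _ hC0
        gcongr
    _ = (C / b) * (|genBinom γ i| * θ ^ i * (T - t0) ^ ((i : ℝ) * θ + 1 - μ) /
          ((1 - θ) ^ ((i : ℝ) - 1) * Real.Gamma ((i : ℝ) * θ + 2 - μ))) := by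
        rw [abs_div, abs_mul, abs_pow, abs_of_pos hθ0, abs_of_pos hden, hΓrec,
          show (i:ℝ)*θ + 1 - μ = (i:ℝ)*θ - μ + 1 by ring]
        field_simp

/-- Uniqueness for the generalized ABC quadratic logistic model. -/
theorem quadratic_logistic_uniqueness
    (t0 T θ μ γ b r L x0 : ℝ) (htT : t0 < T) (hθ0 : 0 < θ) (hθ1 : θ < 1)
    (hμ0 : 0 < μ) (hμ1 : μ < 1) (hγ : 0 < γ) (hb : 0 < b) (hr : 0 < r) (hL : 0 < L)
    (hx0 : |x0| ≤ L)
    (hC1 : C1const t0 T b θ μ γ (r * (1 + 2 * L)) < 1)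
    (x1 x2 : ℝ → ℝ)
    (h1c : ContinuousOn x1 (Set.Icc t0 T))
    (h2c : ContinuousOn x2 (Set.Icc t0 T))
    (h1m : ∀ t ∈ Set.Icc t0 T, x1 t ∈ Set.Icc (-L) L)
    (h2m : ∀ t ∈ Set.Icc t0 T, x2 t ∈ Set.Icc (-L) L)
    (h1e : ∀ t ∈ Set.Icc t0 T,
      x1 t = x0 + ABIntegral t0 b θ μ γ (fun s => r * x1 s * (1 - x1 s)) t)
    (h2e : ∀ t ∈ Set.Icc t0 T,
      x2 t = x0 + ABIntegral t0 b θ μ γ (fun s => r * x2 s * (1 - x2 s)) t) :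
    ∀ t ∈ Set.Icc t0 T, x1 t = x2 t := by
  have h1θ : (0:ℝ) < 1 - θ := by linarith
  have hX : (0:ℝ) < T - t0 := by linarith
  set w : ℕ → ℝ := fun i => |genBinom γ i| * θ ^ i * (T - t0) ^ ((i : ℝ) * θ + 1 - μ) /
      ((1 - θ) ^ ((i : ℝ) - 1) * Real.Gamma ((i : ℝ) * θ + 2 - μ)) with hw
  -- summability of the majorant series
  have hwsum : Summable w := by
    have hQ := summable_pow_div_gamma ((γ + 1) * (θ * (T - t0) ^ θ / (1 - θ))) hθ0 hθ1
      (by linarith : (1:ℝ) ≤ 2 - μ)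
    have hK : Summable (fun i : ℕ => ((T - t0) ^ (1 - μ) * (1 - θ)) *
        (((γ + 1) * (θ * (T - t0) ^ θ / (1 - θ))) ^ i /
          Real.Gamma ((i:ℝ) * θ + (2 - μ)))) := hQ.mul_left _
    refine Summable.of_nonneg_of_le (fun i => ?_) (fun i => ?_) hK
    · have hpow : (0:ℝ) < (1 - θ) ^ ((i:ℝ) - 1) := Real.rpow_pos_of_pos h1θ _
      have hΓ2 : 0 < Real.Gamma ((i:ℝ)*θ + 2 - μ) := Real.Gamma_pos_of_pos (by nlinarith [mul_nonneg (Nat.cast_nonneg i : (0:ℝ) ≤ (i:ℝ)) hθ0.le])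
      apply div_nonneg
      · positivity
      · positivity
    · -- w i ≤ K * (Q^i / Γ)
      rw [show (i:ℝ) * θ + (2 - μ) = (i:ℝ) * θ + 2 - μ by ring]
      have hΓ2 : 0 < Real.Gamma ((i:ℝ)*θ + 2 - μ) := Real.Gamma_pos_of_pos (by nlinarith [mul_nonneg (Nat.cast_nonneg i : (0:ℝ) ≤ (i:ℝ)) hθ0.le])
      have hpow : (0:ℝ) < (1 - θ) ^ ((i:ℝ) - 1) := Real.rpow_pos_of_pos h1θ _
      have e1 : (T - t0) ^ ((i:ℝ)*θ + 1 - μ) = ((T - t0) ^ θ) ^ i * (T - t0) ^ (1 - μ) := by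
        rw [show (i:ℝ)*θ + 1 - μ = θ * (i:ℝ) + (1 - μ) by ring, Real.rpow_add hX,
          Real.rpow_mul hX.le, Real.rpow_natCast]
      have e2 : (1 - θ:ℝ) ^ ((i:ℝ) - 1) = (1 - θ) ^ (i:ℕ) / (1 - θ) := by
        rw [Real.rpow_sub h1θ, Real.rpow_one, Real.rpow_natCast]
      have hg := abs_genBinom_le hγ.le i
      have hXθ : (0:ℝ) < (T - t0) ^ θ := Real.rpow_pos_of_pos hX _
      have hXμ : (0:ℝ) < (T - t0) ^ (1 - μ) := Real.rpow_pos_of_pos hX _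
      have hform : w i = ((T - t0) ^ (1 - μ) * (1 - θ)) *
          (|genBinom γ i| * (θ * (T - t0) ^ θ / (1 - θ)) ^ i /
            Real.Gamma ((i:ℝ)*θ + 2 - μ)) := by
        rw [hw]
        simp only
        rw [e1, e2, div_pow, mul_pow]
        field_simp
      rw [hform]
      calc ((T - t0) ^ (1 - μ) * (1 - θ)) *
            (|genBinom γ i| * (θ * (T - t0) ^ θ / (1 - θ)) ^ i /
              Real.Gamma ((i:ℝ)*θ + 2 - μ))
          ≤ ((T - t0) ^ (1 - μ) * (1 - θ)) *
            ((γ + 1) ^ i * (θ * (T - t0) ^ θ / (1 - θ)) ^ i /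
              Real.Gamma ((i:ℝ)*θ + 2 - μ)) := by
            apply mul_le_mul_of_nonneg_left _ (by positivity)
            gcongr
        _ = ((T - t0) ^ (1 - μ) * (1 - θ)) *
            (((γ + 1) * (θ * (T - t0) ^ θ / (1 - θ))) ^ i /
              Real.Gamma ((i:ℝ)*θ + 2 - μ)) := by rw [mul_pow]
  -- the maximum of |x1 - x2|
  obtain ⟨tm, htm, hmax⟩ := isCompact_Icc.exists_isMaxOn (Set.nonempty_Icc.mpr htT.le)
    ((h1c.sub h2c).abs)
  have hmax' : ∀ t ∈ Set.Icc t0 T, |x1 t - x2 t| ≤ |x1 tm - x2 tm| := fun t htt =>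
    isMaxOn_iff.mp hmax t htt
  set M : ℝ := |x1 tm - x2 tm| with hM
  have hMnn : 0 ≤ M := abs_nonneg _
  set A : ℝ := r * (1 + 2 * L) with hA
  -- bounds on the nonlinearities
  have hbd : ∀ (x : ℝ → ℝ), (∀ t ∈ Set.Icc t0 T, x t ∈ Set.Icc (-L) L) →
      ∀ s ∈ Set.Icc t0 T, |r * x s * (1 - x s)| ≤ r * L * (1 + L) := by
    intro x hx s hs
    have h1 : |x s| ≤ L := abs_le.mpr ⟨(hx s hs).1, (hx s hs).2⟩
    have h2 : |1 - x s| ≤ 1 + L := by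
      rw [abs_le]
      constructor <;> [linarith [abs_le.mp h1]; linarith [abs_le.mp h1]]
    calc |r * x s * (1 - x s)| = r * |x s| * |1 - x s| := by
          rw [abs_mul, abs_mul, abs_of_pos hr]
      _ ≤ r * L * (1 + L) := by
          apply mul_le_mul _ h2 (abs_nonneg _) (by positivity)
          exact mul_le_mul_of_nonneg_left h1 hr.le
  have hdiffbd : ∀ s ∈ Set.Icc t0 T,
      |(r * x1 s * (1 - x1 s)) - (r * x2 s * (1 - x2 s))| ≤ A * M := by
    intro s hs
    have h1 : |x1 s| ≤ L := abs_le.mpr ⟨(h1m s hs).1, (h1m s hs).2⟩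
    have h2 : |x2 s| ≤ L := abs_le.mpr ⟨(h2m s hs).1, (h2m s hs).2⟩
    have hd : |x1 s - x2 s| ≤ M := hmax' s hs
    have heq : (r * x1 s * (1 - x1 s)) - (r * x2 s * (1 - x2 s)) =
        r * (x1 s - x2 s) * (1 - (x1 s + x2 s)) := by ring
    rw [heq, abs_mul, abs_mul, abs_of_pos hr]
    have h3 : |1 - (x1 s + x2 s)| ≤ 1 + 2 * L := by
      rw [abs_le]
      constructor <;> [linarith [abs_le.mp h1, abs_le.mp h2]; linarith [abs_le.mp h1, abs_le.mp h2]]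
    calc r * |x1 s - x2 s| * |1 - (x1 s + x2 s)| ≤ r * M * (1 + 2 * L) := by
          apply mul_le_mul _ h3 (abs_nonneg _) (by positivity)
          exact mul_le_mul_of_nonneg_left hd hr.le
      _ = A * M := by rw [hA]; ring
  -- continuity of nonlinearities
  have hη1c : ContinuousOn (fun s => r * x1 s * (1 - x1 s)) (Set.Icc t0 T) :=
    (continuousOn_const.mul h1c).mul (continuousOn_const.sub h1c)
  have hη2c : ContinuousOn (fun s => r * x2 s * (1 - x2 s)) (Set.Icc t0 T) :=
    (continuousOn_const.mul h2c).mul (continuousOn_const.sub h2c)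
  -- term sequences at tm
  set a1 : ℕ → ℝ := fun i => genBinom γ i * θ ^ i /
      (b * (1 - θ) ^ ((i : ℝ) - 1) * Real.Gamma ((i : ℝ) * θ + 1 - μ)) *
    ∫ s in t0..tm, (tm - s) ^ ((i : ℝ) * θ - μ) * (r * x1 s * (1 - x1 s)) with ha1
  set a2 : ℕ → ℝ := fun i => genBinom γ i * θ ^ i /
      (b * (1 - θ) ^ ((i : ℝ) - 1) * Real.Gamma ((i : ℝ) * θ + 1 - μ)) *
    ∫ s in t0..tm, (tm - s) ^ ((i : ℝ) * θ - μ) * (r * x2 s * (1 - x2 s)) with ha2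
  have hsum1 : Summable a1 := by
    apply Summable.of_abs
    apply Summable.of_nonneg_of_le (fun i => abs_nonneg _)
      (fun i => term_bound htT.le hθ0 hθ1 hμ0 hμ1 hb hη1c (hbd x1 h1m) htm i)
    exact hwsum.mul_left _
  have hsum2 : Summable a2 := by
    apply Summable.of_abs
    apply Summable.of_nonneg_of_le (fun i => abs_nonneg _)
      (fun i => term_bound htT.le hθ0 hθ1 hμ0 hμ1 hb hη2c (hbd x2 h2m) htm i)
    exact hwsum.mul_left _
  -- the difference terms
  have hdterm : ∀ i : ℕ, a1 i - a2 i = genBinom γ i * θ ^ i /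
      (b * (1 - θ) ^ ((i : ℝ) - 1) * Real.Gamma ((i : ℝ) * θ + 1 - μ)) *
    ∫ s in t0..tm, (tm - s) ^ ((i : ℝ) * θ - μ) *
      ((r * x1 s * (1 - x1 s)) - (r * x2 s * (1 - x2 s))) := by
    intro i
    have hiθ : (0:ℝ) ≤ (i:ℝ) * θ := by positivity
    have hp : (-1:ℝ) < (i:ℝ) * θ - μ := by linarith
    have hint1 := integrable_rpow_mul htm.1 hp
      (hη1c.mono (Set.Icc_subset_Icc_right htm.2)) (t := tm)
    have hint2 := integrable_rpow_mul htm.1 hp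
      (hη2c.mono (Set.Icc_subset_Icc_right htm.2)) (t := tm)
    rw [ha1, ha2]
    simp only
    rw [← mul_sub, ← intervalIntegral.integral_sub hint1 hint2]
    congr 1
    apply intervalIntegral.integral_congr
    intro s _
    ring
  have hdiffc : ContinuousOn
      (fun s => (r * x1 s * (1 - x1 s)) - (r * x2 s * (1 - x2 s))) (Set.Icc t0 T) :=
    hη1c.sub hη2c
  have hdbound : ∀ i : ℕ, |a1 i - a2 i| ≤ (A * M / b) * w i := by
    intro i
    rw [hdterm i]
    exact term_bound htT.le hθ0 hθ1 hμ0 hμ1 hb hdiffc hdiffbd htm i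
  have hsumd : Summable (fun i => |a1 i - a2 i|) := by
    apply Summable.of_nonneg_of_le (fun i => abs_nonneg _) hdbound
    exact hwsum.mul_left _
  -- key contraction inequality
  have key : M ≤ C1const t0 T b θ μ γ A * M := by
    have e0 : x1 tm - x2 tm = (∑' i, a1 i) - (∑' i, a2 i) := by
      rw [h1e tm htm, h2e tm htm]
      rw [ABIntegral, ABIntegral]
      ring
    have e1 : x1 tm - x2 tm = ∑' i, (a1 i - a2 i) := by
      rw [e0, Summable.tsum_sub hsum1 hsum2]
    calc M = |∑' i, (a1 i - a2 i)| := by rw [hM, e1]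
      _ ≤ ∑' i, |a1 i - a2 i| := by
          have := norm_tsum_le_tsum_norm (f := fun i => a1 i - a2 i)
            (by simpa [Real.norm_eq_abs] using hsumd)
          simpa [Real.norm_eq_abs] using this
      _ ≤ ∑' i, (A * M / b) * w i :=
          Summable.tsum_le_tsum hdbound hsumd (hwsum.mul_left _)
      _ = (A * M / b) * ∑' i, w i := tsum_mul_left
      _ = C1const t0 T b θ μ γ A * M := by
          rw [C1const, hA, hw]
          ring
  -- conclude
  have hC1nn : 0 ≤ C1const t0 T b θ μ γ A := by
    rw [C1const]
    apply mul_nonneg (by positivity)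
    apply tsum_nonneg
    intro i
    have hpow : (0:ℝ) < (1 - θ) ^ ((i:ℝ) - 1) := Real.rpow_pos_of_pos h1θ _
    have hΓ2 : 0 < Real.Gamma ((i:ℝ)*θ + 2 - μ) := Real.Gamma_pos_of_pos (by nlinarith [mul_nonneg (Nat.cast_nonneg i : (0:ℝ) ≤ (i:ℝ)) hθ0.le])
    positivity
  have hM0 : M ≤ 0 := by
    rcases le_or_gt M 0 with h | h
    · exact h
    · exfalso
      have : C1const t0 T b θ μ γ A * M < 1 * M := by
        apply mul_lt_mul_of_pos_right _ h
        rw [hA] at hC1 ⊢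
        exact hC1
      linarith [key, this]
  intro t htt
  have h := hmax' t htt
  have : |x1 t - x2 t| = 0 := le_antisymm (h.trans hM0) (abs_nonneg _)
  have := abs_eq_zero.mp this
  linarith [sub_eq_zero.mp this]
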